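/- arXiv:1409.0476 — 2 statements merged into one kernel-verified Lean document; each statement's English description precedes it below -/
import Mathlib

section
/- Let L be a bounded, self-adjoint, nonnegative operator on a Hilbert space H satisfying the spectral gap condition ⟨f, Lf⟩ ≥ σ₀ ‖f‖² for all f orthogonal to ker L, with σ₀ > 0, and let P be the orthogonal projection onto ker L. Let g : [0,∞) → H be continuous with ‖g(τ)‖ ≤ C e^{−στ} for some constants C, σ > 0. Then there exists an initial datum φ₁ ∈ H such that the unique continuously differentiable solution f : [0,∞) → H of f′(τ) + L f(τ) = g(τ), f(0) = φ₁, satisfies f(τ) → 0 in H as τ → ∞; indeed, the solution tends to 0 at infinity if and only if P φ₁ = −∫₀^∞ P g(τ) dτ. -/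
open RealInnerProductSpace MeasureTheory Filter Set


lemma decay_aux {H : Type*} [NormedAddCommGroup H] [InnerProductSpace ℝ H]
    (L : H →L[ℝ] H) (σ₀ : ℝ) (hσ₀ : 0 < σ₀)
    (hgap : ∀ f : H, (∀ g : H, L g = 0 → ⟪f, g⟫ = 0) → σ₀ * ‖f‖ ^ 2 ≤ ⟪f, L f⟫)
    (q h : ℝ → H)
    (hq' : ∀ τ : ℝ, 0 ≤ τ → HasDerivWithinAt q (h τ - L (q τ)) (Ici 0) τ)
    (hperp : ∀ τ : ℝ, 0 ≤ τ → ∀ k : H, L k = 0 → ⟪q τ, k⟫ = 0)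
    (C' σ' : ℝ) (hC' : 0 ≤ C') (hσ' : 0 < σ') (hσ'' : 2 * σ' < σ₀)
    (hh : ∀ τ : ℝ, 0 ≤ τ → ‖h τ‖ ≤ C' * Real.exp (-σ' * τ)) :
    Tendsto q atTop (nhds 0) := by
  set u : ℝ → ℝ := fun τ => ⟪q τ, q τ⟫ with hu_def
  have hunorm : ∀ τ, u τ = ‖q τ‖ ^ 2 := fun τ => real_inner_self_eq_norm_sq _
  set K : ℝ := C' ^ 2 / σ₀ with hK_def
  set β : ℝ := σ₀ - 2 * σ' with hβ_def
  have hβ : 0 < β := by simp [hβ_def]; linarith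
  have hK : 0 ≤ K := by positivity
  -- derivative of u
  have hu' : ∀ τ : ℝ, 0 ≤ τ →
      HasDerivWithinAt u (2 * ⟪q τ, h τ - L (q τ)⟫) (Ici 0) τ := by
    intro τ hτ
    have := (hq' τ hτ).inner ℝ (hq' τ hτ)
    rw [real_inner_comm (q τ) (h τ - L (q τ)), ← two_mul] at this
    exact this
  -- bound on the derivative
  have hbound : ∀ τ : ℝ, 0 ≤ τ →
      2 * ⟪q τ, h τ - L (q τ)⟫ ≤ -σ₀ * u τ + K * Real.exp (-(2*σ') * τ) := by
    intro τ hτ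
    have h1 : σ₀ * ‖q τ‖ ^ 2 ≤ ⟪q τ, L (q τ)⟫ := hgap _ (hperp τ hτ)
    have h2 : ⟪q τ, h τ⟫ ≤ ‖q τ‖ * ‖h τ‖ := real_inner_le_norm _ _
    have h3 : ‖h τ‖ ≤ C' * Real.exp (-σ' * τ) := hh τ hτ
    have h4 : Real.exp (-(2*σ') * τ) = Real.exp (-σ' * τ) ^ 2 := by
      rw [← Real.exp_nat_mul]; ring_nf
    have h5 : (0:ℝ) < Real.exp (-σ' * τ) := Real.exp_pos _
    have h6 : 0 ≤ ‖q τ‖ := norm_nonneg _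
    have key : 2 * (‖q τ‖ * (C' * Real.exp (-σ' * τ)))
        ≤ σ₀ * ‖q τ‖^2 + K * Real.exp (-σ' * τ) ^ 2 := by
      have hKσ : K * σ₀ = C' ^ 2 := by
        rw [hK_def]; field_simp
      nlinarith [sq_nonneg (σ₀ * ‖q τ‖ - C' * Real.exp (-σ' * τ)),
        mul_pos h5 h5, sq_nonneg (‖q τ‖ - Real.exp (-σ' * τ))]
    rw [inner_sub_right, hunorm, h4]
    nlinarith [mul_le_mul_of_nonneg_left h3 h6]
  -- Lyapunov function
  set φ : ℝ → ℝ := fun τ => Real.exp (σ₀ * τ) * u τ - (K / β) * Real.exp (β * τ) with hφ_def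
  have huc : ContinuousOn u (Ici 0) := fun τ hτ => (hu' τ hτ).continuousWithinAt
  have hφcont : ContinuousOn φ (Ici 0) :=
    (((Real.continuous_exp.comp (continuous_const.mul continuous_id)).continuousOn.mul huc).sub
      ((continuous_const.mul
        (Real.continuous_exp.comp (continuous_const.mul continuous_id))).continuousOn))
  have hφderiv : ∀ x ∈ interior (Ici (0:ℝ)), HasDerivAt φ
      (σ₀ * Real.exp (σ₀ * x) * u x + Real.exp (σ₀ * x) * (2 * ⟪q x, h x - L (q x)⟫)
        - (K / β) * (β * Real.exp (β * x))) x := by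
    intro x hx
    rw [interior_Ici] at hx
    have hx0 : (0:ℝ) ≤ x := le_of_lt hx
    have hu : HasDerivAt u (2 * ⟪q x, h x - L (q x)⟫) x :=
      (hu' x hx0).hasDerivAt (Ici_mem_nhds hx)
    have he : HasDerivAt (fun τ => Real.exp (σ₀ * τ)) (σ₀ * Real.exp (σ₀ * x)) x := by
      simpa [mul_comm] using ((hasDerivAt_id x).const_mul σ₀).exp
    have heβ : HasDerivAt (fun τ => Real.exp (β * τ)) (β * Real.exp (β * x)) x := by
      simpa [mul_comm] using ((hasDerivAt_id x).const_mul β).exp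
    exact (he.mul hu).sub (heβ.const_mul (K / β))
  have hmono : AntitoneOn φ (Ici 0) := by
    apply antitoneOn_of_deriv_nonpos (convex_Ici 0) hφcont
    · intro x hx
      exact (hφderiv x hx).differentiableAt.differentiableWithinAt
    · intro x hx
      rw [(hφderiv x hx).deriv]
      rw [interior_Ici] at hx
      have hx0 : (0:ℝ) ≤ x := le_of_lt hx
      have hb := hbound x hx0
      have hexp : Real.exp (σ₀ * x) * Real.exp (-(2*σ') * x) = Real.exp (β * x) := by
        rw [← Real.exp_add]; congr 1; rw [hβ_def]; ring
      have hKβ : K / β * β = K := div_mul_cancel₀ K hβ.ne'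
      have he1 : (0:ℝ) < Real.exp (σ₀ * x) := Real.exp_pos _
      have hb' := mul_le_mul_of_nonneg_left hb he1.le
      have hKz : K / β * (β * Real.exp (β * x)) = K * Real.exp (β * x) := by
        rw [← mul_assoc, hKβ]
      rw [hKz]
      nlinarith [hb', hexp]
  -- the resulting bound on u
  have hubound : ∀ x : ℝ, 0 ≤ x →
      u x ≤ Real.exp (-σ₀ * x) * φ 0 + (K / β) * Real.exp (-(2*σ') * x) := by
    intro x hx
    have h1 : φ x ≤ φ 0 := hmono (self_mem_Ici) hx hx
    have h2 : Real.exp (σ₀ * x) * u x ≤ φ 0 + (K / β) * Real.exp (β * x) := by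
      have : φ x = Real.exp (σ₀ * x) * u x - (K / β) * Real.exp (β * x) := rfl
      linarith [this ▸ h1]
    have he1 : (0:ℝ) < Real.exp (-σ₀ * x) := Real.exp_pos _
    have h3 := mul_le_mul_of_nonneg_left h2 he1.le
    have h4 : Real.exp (-σ₀ * x) * (Real.exp (σ₀ * x) * u x) = u x := by
      rw [← mul_assoc, ← Real.exp_add]; simp
    have h5 : Real.exp (-σ₀ * x) * Real.exp (β * x) = Real.exp (-(2*σ') * x) := by
      rw [← Real.exp_add]; congr 1; rw [hβ_def]; ring
    calc u x = Real.exp (-σ₀ * x) * (Real.exp (σ₀ * x) * u x) := h4.symm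
      _ ≤ Real.exp (-σ₀ * x) * (φ 0 + (K / β) * Real.exp (β * x)) := h3
      _ = Real.exp (-σ₀ * x) * φ 0 + (K / β) * Real.exp (-(2*σ') * x) := by
          rw [mul_add, ← h5]; ring
  -- limits
  have e1 : Tendsto (fun x : ℝ => Real.exp (-σ₀ * x)) atTop (nhds 0) := by
    apply Real.tendsto_exp_atBot.comp
    exact Tendsto.const_mul_atTop_of_neg (neg_lt_zero.2 hσ₀) tendsto_id |>.congr (by intro x; simp)
  have e2 : Tendsto (fun x : ℝ => Real.exp (-(2*σ') * x)) atTop (nhds 0) := by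
    apply Real.tendsto_exp_atBot.comp
    have h2σ : (0:ℝ) < 2 * σ' := by linarith
    exact Tendsto.const_mul_atTop_of_neg (neg_lt_zero.2 h2σ) tendsto_id |>.congr (by intro x; simp)
  have hB : Tendsto (fun x : ℝ => Real.exp (-σ₀ * x) * φ 0 + (K / β) * Real.exp (-(2*σ') * x))
      atTop (nhds 0) := by
    have := (e1.mul_const (φ 0)).add (e2.const_mul (K / β))
    simpa using this
  have hu0 : Tendsto u atTop (nhds 0) := by
    apply tendsto_of_tendsto_of_tendsto_of_le_of_le' tendsto_const_nhds hB
    · exact Eventually.of_forall fun x => by rw [hunorm]; positivity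
    · exact (eventually_ge_atTop 0).mono hubound
  rw [tendsto_zero_iff_norm_tendsto_zero]
  have := (Real.continuous_sqrt.tendsto 0).comp hu0
  simp only [Function.comp_def, Real.sqrt_zero] at this
  convert this using 2 with τ
  rw [hunorm, Real.sqrt_sq (norm_nonneg _)]

set_option maxHeartbeats 1000000 in
set_option synthInstance.maxHeartbeats 400000 in
/-- For the forced initial-layer equation `f' + L f = g` with exponentially decaying
forcing `g`, there is an initial datum `φ₁` whose solution tends to `0` at infinity;
moreover a solution tends to `0` if and only if `P φ₁ = -∫₀^∞ P g(τ) dτ`, where `P` is the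
orthogonal projection onto `ker L`. -/
theorem stmt3 {H : Type*} [NormedAddCommGroup H] [InnerProductSpace ℝ H] [CompleteSpace H]
    (L : H →L[ℝ] H) (hL : IsSelfAdjoint L)
    (hpos : ∀ f : H, 0 ≤ ⟪f, L f⟫)
    (σ₀ : ℝ) (hσ₀ : 0 < σ₀)
    (hgap : ∀ f : H, (∀ g : H, L g = 0 → ⟪f, g⟫ = 0) → σ₀ * ‖f‖ ^ 2 ≤ ⟪f, L f⟫)
    -- `P` is the orthogonal projection onto `ker L`:
    (P : H →L[ℝ] H)
    (hPker : ∀ f : H, L (P f) = 0)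
    (hPid : ∀ f : H, L f = 0 → P f = f)
    (hPorth : ∀ f g : H, L g = 0 → ⟪f - P f, g⟫ = 0)
    -- the forcing `g` is continuous on `[0, ∞)` and decays exponentially:
    (g : ℝ → H) (hgcont : ContinuousOn g (Ici (0:ℝ)))
    (C σ : ℝ) (hC : 0 < C) (hσ : 0 < σ)
    (hgdecay : ∀ τ : ℝ, 0 ≤ τ → ‖g τ‖ ≤ C * Real.exp (-σ * τ)) :
    -- existence of an initial datum with decaying solution:
    (∃ φ₁ : H, ∃ f : ℝ → H, f 0 = φ₁ ∧
      (∀ τ : ℝ, 0 ≤ τ → HasDerivWithinAt f (g τ - L (f τ)) (Ici (0:ℝ)) τ) ∧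
      Tendsto f atTop (nhds (0 : H))) ∧
    -- characterization: the solution tends to `0` iff `P φ₁ = -∫₀^∞ P (g τ) dτ`:
    (∀ φ₁ : H, ∀ f : ℝ → H, f 0 = φ₁ →
      (∀ τ : ℝ, 0 ≤ τ → HasDerivWithinAt f (g τ - L (f τ)) (Ici (0:ℝ)) τ) →
      (Tendsto f atTop (nhds (0 : H)) ↔
        P φ₁ = -∫ τ in Ici (0:ℝ), P (g τ))) := by
  have hsym : ∀ x y : H, ⟪L x, y⟫ = ⟪x, L y⟫ := fun x y =>
    (ContinuousLinearMap.isSelfAdjoint_iff_isSymmetric.mp hL) x y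
  -- P annihilates the range of L
  have hPL : ∀ v : H, P (L v) = 0 := by
    intro v
    have hk : L (P (L v)) = 0 := hPker _
    have h1 : ⟪L v - P (L v), P (L v)⟫ = 0 := hPorth (L v) _ hk
    have h2 : ⟪L v, P (L v)⟫ = 0 := by rw [hsym, hk, inner_zero_right]
    rw [inner_sub_left, h2] at h1
    have : ⟪P (L v), P (L v)⟫ = 0 := by linarith
    exact inner_self_eq_zero.mp this
  have hPP : ∀ v : H, P (P v) = P v := fun v => hPid _ (hPker v)
  -- continuity and integrability of `P ∘ g`
  have hPgcont : ContinuousOn (fun τ => P (g τ)) (Ici (0:ℝ)) :=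
    P.continuous.comp_continuousOn hgcont
  have hPgint : IntegrableOn (fun τ => P (g τ)) (Ici (0:ℝ)) := by
    have hmaj : IntegrableOn (fun τ => ‖P‖ * C * Real.exp (-σ * τ)) (Ici (0:ℝ)) := by
      rw [integrableOn_Ici_iff_integrableOn_Ioi]
      exact (exp_neg_integrableOn_Ioi 0 hσ).const_mul (‖P‖ * C)
    apply Integrable.mono' hmaj (hPgcont.aestronglyMeasurable measurableSet_Ici)
    rw [ae_restrict_iff' measurableSet_Ici]
    filter_upwards with τ hτ
    calc ‖P (g τ)‖ ≤ ‖P‖ * ‖g τ‖ := P.le_opNorm _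
      _ ≤ ‖P‖ * (C * Real.exp (-σ * τ)) :=
          mul_le_mul_of_nonneg_left (hgdecay τ hτ) (norm_nonneg _)
      _ = ‖P‖ * C * Real.exp (-σ * τ) := by ring
  set I : H := ∫ τ in Ici (0:ℝ), P (g τ) with hI_def
  -- FTC identity for an arbitrary solution
  have key : ∀ f : ℝ → H,
      (∀ τ : ℝ, 0 ≤ τ → HasDerivWithinAt f (g τ - L (f τ)) (Ici (0:ℝ)) τ) →
      ∀ b : ℝ, 0 ≤ b → P (f b) = P (f 0) + ∫ s in (0:ℝ)..b, P (g s) := by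
    intro f hsol b hb
    have hderiv : ∀ x ∈ Ioo (0:ℝ) b, HasDerivWithinAt (fun t => P (f t)) (P (g x)) (Ioi x) x := by
      intro x hx
      have h1 : HasDerivWithinAt (fun t => P (f t)) (P (g x - L (f x))) (Ici (0:ℝ)) x :=
        P.hasFDerivAt.comp_hasDerivWithinAt x (hsol x hx.1.le)
      have h2 : P (g x - L (f x)) = P (g x) := by rw [map_sub, hPL, sub_zero]
      rw [h2] at h1
      exact h1.mono fun y hy => le_of_lt (lt_trans hx.1 hy)
    have hcont : ContinuousOn (fun t => P (f t)) (Icc 0 b) := by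
      apply P.continuous.comp_continuousOn
      intro t ht
      exact ((hsol t ht.1).continuousWithinAt).mono Icc_subset_Ici_self
    have hint : IntervalIntegrable (fun s => P (g s)) volume 0 b := by
      apply ContinuousOn.intervalIntegrable
      apply hPgcont.mono
      rw [uIcc_of_le hb]; exact Icc_subset_Ici_self
    have := intervalIntegral.integral_eq_sub_of_hasDeriv_right_of_le hb hcont hderiv hint
    rw [this]; abel
  have htint : Tendsto (fun b => ∫ s in (0:ℝ)..b, P (g s)) atTop (nhds I) := by
    rw [hI_def, integral_Ici_eq_integral_Ioi]
    exact intervalIntegral_tendsto_integral_Ioi 0 (hPgint.mono_set Ioi_subset_Ici_self) tendsto_id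
  -- forward implication
  have fwd : ∀ f : ℝ → H,
      (∀ τ : ℝ, 0 ≤ τ → HasDerivWithinAt f (g τ - L (f τ)) (Ici (0:ℝ)) τ) →
      Tendsto f atTop (nhds (0:H)) → P (f 0) = -I := by
    intro f hsol hf0
    have h1 : Tendsto (fun b => P (f b)) atTop (nhds (0:H)) := by
      have := (P.continuous.tendsto 0).comp hf0
      simpa [Function.comp_def] using this
    have h2 : Tendsto (fun b => P (f b)) atTop (nhds (P (f 0) + I)) := by
      apply Tendsto.congr' _ (tendsto_const_nhds.add htint)
      filter_upwards [eventually_ge_atTop (0:ℝ)] with b hb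
      exact (key f hsol b hb).symm
    have h3 := tendsto_nhds_unique h2 h1
    exact eq_neg_of_add_eq_zero_left h3
  -- backward implication
  have bwd : ∀ f : ℝ → H,
      (∀ τ : ℝ, 0 ≤ τ → HasDerivWithinAt f (g τ - L (f τ)) (Ici (0:ℝ)) τ) →
      P (f 0) = -I → Tendsto f atTop (nhds (0:H)) := by
    intro f hsol hf0
    have hPf : Tendsto (fun τ => P (f τ)) atTop (nhds (0:H)) := by
      have h2 : Tendsto (fun b => P (f b)) atTop (nhds (P (f 0) + I)) := by
        apply Tendsto.congr' _ (tendsto_const_nhds.add htint)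
        filter_upwards [eventually_ge_atTop (0:ℝ)] with b hb
        exact (key f hsol b hb).symm
      rwa [hf0, neg_add_cancel] at h2
    set σ' : ℝ := min σ (σ₀ / 4) with hσ'_def
    have hσ'pos : 0 < σ' := lt_min hσ (by linarith)
    have hσ'' : 2 * σ' < σ₀ := by
      have : σ' ≤ σ₀ / 4 := min_le_right _ _
      linarith
    have hq : Tendsto (fun τ => f τ - P (f τ)) atTop (nhds (0:H)) := by
      apply decay_aux L σ₀ hσ₀ hgap _ (fun τ => g τ - P (g τ)) ?_ ?_ ((1 + ‖P‖) * C) σ'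
        (by positivity) hσ'pos hσ'' ?_
      · intro τ hτ
        have h1 := hsol τ hτ
        have h2 : HasDerivWithinAt (fun t => P (f t)) (P (g τ)) (Ici (0:ℝ)) τ := by
          have := P.hasFDerivAt.comp_hasDerivWithinAt τ h1
          simpa [map_sub, hPL, Function.comp_def] using this
        have h3 := h1.sub h2
        have hLq : L (f τ - P (f τ)) = L (f τ) := by rw [map_sub, hPker, sub_zero]
        convert h3 using 1
        · rfl
        rw [hLq]; abel
      · intro τ _ k hk
        exact hPorth (f τ) k hk
      · intro τ hτ
        have hP1 : (0:ℝ) ≤ 1 + ‖P‖ := by positivity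
        calc ‖g τ - P (g τ)‖ ≤ ‖g τ‖ + ‖P (g τ)‖ := norm_sub_le _ _
          _ ≤ ‖g τ‖ + ‖P‖ * ‖g τ‖ := by linarith [P.le_opNorm (g τ)]
          _ = (1 + ‖P‖) * ‖g τ‖ := by ring
          _ ≤ (1 + ‖P‖) * (C * Real.exp (-σ * τ)) :=
              mul_le_mul_of_nonneg_left (hgdecay τ hτ) hP1
          _ = (1 + ‖P‖) * C * Real.exp (-σ * τ) := by ring
          _ ≤ (1 + ‖P‖) * C * Real.exp (-σ' * τ) := by
              apply mul_le_mul_of_nonneg_left _ (by positivity)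
              apply Real.exp_le_exp.mpr
              have hm : σ' ≤ σ := min_le_left _ _
              nlinarith
    have := hPf.add hq
    rw [add_zero] at this
    exact this.congr fun τ => by abel
  -- construction of the decaying solution
  have hgc' : Continuous (fun τ : ℝ => g (max τ 0)) :=
    hgcont.comp_continuous (continuous_id.max continuous_const) fun x => le_max_right x 0
  set g' : ℝ → H := fun τ => g (max τ 0) with hg'_def
  have hg'eq : ∀ τ : ℝ, 0 ≤ τ → g' τ = g τ := fun τ hτ => by
    simp only [hg'_def, max_eq_left hτ]
  set hfun : ℝ → H := fun s => g' s - P (g' s) with hh_def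
  have hhcont : Continuous hfun := hgc'.sub (P.continuous.comp hgc')
  set B : ℝ → (H →L[ℝ] H) := fun s => NormedSpace.exp (s • L) with hB_def
  set A : ℝ → (H →L[ℝ] H) := fun s => NormedSpace.exp (s • (-L)) with hA_def
  let +nondep : NormedAlgebra ℚ (H →L[ℝ] H) := .restrictScalars ℚ ℝ (H →L[ℝ] H)
  have hBcont : Continuous B :=
    NormedSpace.exp_continuous.comp (continuous_id.smul continuous_const)
  have hψcont : Continuous (fun s => B s (hfun s)) := hBcont.clm_apply hhcont
  set F : ℝ → H := fun τ => ∫ s in (0:ℝ)..τ, B s (hfun s) with hF_def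
  have hF' : ∀ τ : ℝ, HasDerivAt F (B τ (hfun τ)) τ := fun τ =>
    intervalIntegral.integral_hasDerivAt_right (hψcont.intervalIntegrable _ _)
      (hψcont.stronglyMeasurableAtFilter _ _) hψcont.continuousAt
  have hA' : ∀ τ : ℝ, HasDerivAt A (A τ * (-L)) τ := fun τ =>
    hasDerivAt_exp_smul_const (-L) τ
  set q : ℝ → H := fun τ => A τ (F τ) with hq_def
  have hAB : ∀ τ : ℝ, A τ * B τ = 1 := by
    intro τ
    have hcomm : Commute (τ • (-L)) (τ • L) :=
      (((Commute.refl L).neg_left).smul_left τ).smul_right τ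
    rw [hA_def, hB_def]
    show NormedSpace.exp (τ • (-L)) * NormedSpace.exp (τ • L) = 1
    rw [← NormedSpace.exp_add_of_commute hcomm]
    simp [smul_neg, NormedSpace.exp_zero]
  have hq' : ∀ τ : ℝ, HasDerivAt q (hfun τ - L (q τ)) τ := by
    intro τ
    have h0 := (hA' τ).clm_apply (hF' τ)
    have hcomm : A τ * (-L) = (-L) * A τ :=
      (((Commute.refl (-L)).smul_left τ).exp_left).eq
    have e1 : (A τ * (-L)) (F τ) = -(L (q τ)) := by
      rw [hcomm]
      simp [ContinuousLinearMap.mul_apply, hq_def]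
    have e2 : A τ (B τ (hfun τ)) = hfun τ := by
      rw [← ContinuousLinearMap.mul_apply, hAB, ContinuousLinearMap.one_apply]
    rw [e1, e2] at h0
    convert h0 using 1
    abel
  set p : ℝ → H := fun τ => (∫ s in (0:ℝ)..τ, P (g' s)) - I with hp_def
  have hPg'cont : Continuous fun s => P (g' s) := P.continuous.comp hgc'
  have hp' : ∀ τ : ℝ, HasDerivAt p (P (g' τ)) τ := fun τ =>
    (intervalIntegral.integral_hasDerivAt_right (hPg'cont.intervalIntegrable _ _)
      (hPg'cont.stronglyMeasurableAtFilter _ _) hPg'cont.continuousAt).sub_const I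
  set f : ℝ → H := fun τ => p τ + q τ with hf_def
  have hLp : ∀ τ : ℝ, L (p τ) = 0 := by
    intro τ
    show L ((∫ s in (0:ℝ)..τ, P (g' s)) - I) = 0
    rw [map_sub]
    have h1 : L (∫ s in (0:ℝ)..τ, P (g' s)) = 0 := by
      rw [← L.intervalIntegral_comp_comm (hPg'cont.intervalIntegrable _ _)]
      simp [hPker]
    have h2 : L I = 0 := by
      rw [hI_def, ← L.integral_comp_comm hPgint]
      simp [hPker]
    rw [h1, h2, sub_zero]
  have hfd : ∀ τ : ℝ, 0 ≤ τ → HasDerivWithinAt f (g τ - L (f τ)) (Ici (0:ℝ)) τ := by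
    intro τ hτ
    have h0 := (hp' τ).add (hq' τ)
    have hLf : L (f τ) = L (q τ) := by
      show L (p τ + q τ) = L (q τ)
      rw [map_add, hLp, zero_add]
    have : P (g' τ) + (hfun τ - L (q τ)) = g τ - L (f τ) := by
      rw [hLf, hh_def]
      show P (g' τ) + (g' τ - P (g' τ) - L (q τ)) = g τ - L (q τ)
      rw [hg'eq τ hτ]; abel
    rw [this] at h0
    exact h0.hasDerivWithinAt
  have hf0 : f 0 = -I := by
    show p 0 + q 0 = -I
    have hp0 : p 0 = -I := by
      show (∫ s in (0:ℝ)..(0:ℝ), P (g' s)) - I = -I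
      rw [intervalIntegral.integral_same, zero_sub]
    have hq0 : q 0 = 0 := by
      show A 0 (F 0) = 0
      have : F 0 = 0 := by
        show (∫ s in (0:ℝ)..(0:ℝ), B s (hfun s)) = 0
        rw [intervalIntegral.integral_same]
      rw [this, map_zero]
    rw [hp0, hq0, add_zero]
  have hPf0 : P (f 0) = -I := by
    rw [hf0, map_neg]
    congr 1
    rw [hI_def, ← P.integral_comp_comm hPgint]
    exact setIntegral_congr_fun measurableSet_Ici fun τ _ => hPP (g τ)
  refine ⟨⟨-I, f, hf0, hfd, bwd f hfd hPf0⟩, ?_⟩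
  intro φ₁ f₂ hf₂0 hsol₂
  constructor
  · intro htend
    rw [← hf₂0]
    exact fwd f₂ hsol₂ htend
  · intro hchar
    exact bwd f₂ hsol₂ (by rw [hf₂0]; exact hchar)
end

section
/- Let 𝓛 be the collision operator on L²(−1,1) with kernel κ as in the context; assume ker 𝓛 = span{1} and the spectral gap ∫_{−1}^1 f (𝓛f) dμ ≥ σ₀ ‖f − ⟨f⟩‖²_{L²(dμ)} for all f ∈ L²(−1,1), with σ₀ > 0. Let ε > 0 and let E : [0,T] × [a,b] × [−1,1] → ℝ be a C¹ solution of ε ∂_t E + μ ∂_x E + (1/ε) 𝓛 E = R + G, where R, G are continuous and R satisfies ∫_{−1}^1 R(t,x,μ) dμ = 0 for all (t,x). Then for every t ∈ [0,T]: (ε/2) ‖E(t)‖²_{L²(dx dμ)} + (σ₀/(2ε)) ∫₀^t ‖E − ⟨E⟩‖²_{L²(dx dμ)}(s) ds ≤ (ε/2) ‖E(0)‖²_{L²(dx dμ)} + (ε/(2σ₀)) ∫₀^t ‖R(s)‖²_{L²(dx dμ)} ds + ∫₀^t ‖G(s)‖_{L²(dx dμ)} ‖E(s)‖_{L²(dx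 dμ)} ds + (1/2) ∫₀^t ∫₀^1 μ E(s,a,μ)² dμ ds + (1/2) ∫₀^t ∫_{−1}^0 |μ| E(s,b,μ)² dμ ds. -/
open MeasureTheory Set

/-- MemLp 2 for continuous functions on restricted finite interval. -/
lemma aux_memLp2 (f : ℝ → ℝ) (hf : Continuous f) (c d : ℝ) :
    MemLp f 2 (volume.restrict (Icc c d)) := by
  have h : IsFiniteMeasure (volume.restrict (Icc c d)) := by
    constructor; simp [Real.volume_Icc]
  obtain ⟨C, hC⟩ := (isCompact_Icc : IsCompact (Icc c d)).exists_bound_of_continuousOn hf.continuousOn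
  have h2 : MemLp f ⊤ (volume.restrict (Icc c d)) :=
    memLp_top_of_bound (hf.aestronglyMeasurable.restrict (s := Icc c d)) C
      ((ae_restrict_iff' (μ := volume) measurableSet_Icc).2 (Filter.Eventually.of_forall hC))
  exact h2.mono_exponent le_top

/-- parametric continuity: one parameter. -/
lemma aux_cont1 (g : ℝ → ℝ → ℝ) (hg : Continuous fun p : ℝ × ℝ => g p.1 p.2) (c d : ℝ) :
    Continuous fun s => ∫ x in Icc c d, g s x := by
  exact continuous_parametric_integral_of_continuous hg isCompact_Icc

/-- parametric continuity: two parameters. -/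
lemma aux_cont2 (f : ℝ → ℝ → ℝ → ℝ) (hf : Continuous fun p : ℝ × ℝ × ℝ => f p.1 p.2.1 p.2.2)
    (c d : ℝ) : Continuous fun p : ℝ × ℝ => ∫ μ in Icc c d, f p.1 p.2 μ := by
  apply continuous_parametric_integral_of_continuous
    (f := fun (p : ℝ × ℝ) (μ : ℝ) => f p.1 p.2 μ) ?_ isCompact_Icc
  have : Continuous fun q : (ℝ × ℝ) × ℝ => (q.1.1, q.1.2, q.2) :=
    (continuous_fst.comp continuous_fst).prodMk ((continuous_snd.comp continuous_fst).prodMk continuous_snd)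
  exact hf.comp this

/-- Fubini swap for continuous functions on boxes. -/
lemma aux_swap2 (g : ℝ → ℝ → ℝ) (hg : Continuous fun p : ℝ × ℝ => g p.1 p.2) (c d e f' : ℝ) :
    ∫ x in Icc c d, ∫ y in Icc e f', g x y = ∫ y in Icc e f', ∫ x in Icc c d, g x y := by
  apply integral_integral_swap
  rw [Function.uncurry_def]
  rw [Measure.prod_restrict]
  exact ContinuousOn.integrableOn_compact (isCompact_Icc.prod isCompact_Icc) hg.continuousOn

/-- iterated integral equals product-measure integral, continuous case. -/
lemma aux_iterprod (g : ℝ → ℝ → ℝ) (hg : Continuous fun p : ℝ × ℝ => g p.1 p.2) (c d e f' : ℝ) :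
    ∫ x in Icc c d, ∫ y in Icc e f', g x y
      = ∫ p in Icc c d ×ˢ Icc e f', g p.1 p.2 ∂(volume.prod volume) := by
  rw [← Measure.prod_restrict]
  exact (integral_integral (f := fun x y => g x y) (by
    rw [Function.uncurry_def, Measure.prod_restrict]
    exact ContinuousOn.integrableOn_compact (isCompact_Icc.prod isCompact_Icc) hg.continuousOn))

/-- triple Fubini: move outermost `s`-integral innermost. -/
lemma aux_swap13 (f : ℝ → ℝ → ℝ → ℝ) (hf : Continuous fun p : ℝ × ℝ × ℝ => f p.1 p.2.1 p.2.2)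
    (t₀ t₁ c d e f' : ℝ) :
    ∫ s in Icc t₀ t₁, ∫ x in Icc c d, ∫ y in Icc e f', f s x y
      = ∫ x in Icc c d, ∫ y in Icc e f', ∫ s in Icc t₀ t₁, f s x y := by
  have h1 : ∀ s, Continuous fun p : ℝ × ℝ => f s p.1 p.2 := fun s =>
    hf.comp (continuous_const.prodMk (continuous_fst.prodMk continuous_snd))
  have step1 : ∀ s, ∫ x in Icc c d, ∫ y in Icc e f', f s x y
      = ∫ p in Icc c d ×ˢ Icc e f', f s p.1 p.2 ∂(volume.prod volume) := fun s =>
    aux_iterprod _ (h1 s) c d e f'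
  have hswap : ∫ s in Icc t₀ t₁, ∫ p in Icc c d ×ˢ Icc e f', f s p.1 p.2 ∂(volume.prod volume)
      = ∫ p in Icc c d ×ˢ Icc e f', (∫ s in Icc t₀ t₁, f s p.1 p.2) ∂(volume.prod volume) := by
    apply integral_integral_swap
    rw [Function.uncurry_def, Measure.prod_restrict]
    apply ContinuousOn.integrableOn_compact (isCompact_Icc.prod (isCompact_Icc.prod isCompact_Icc))
    exact hf.continuousOn
  have step3 : ∫ p in Icc c d ×ˢ Icc e f', (∫ s in Icc t₀ t₁, f s p.1 p.2) ∂(volume.prod volume)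
      = ∫ x in Icc c d, ∫ y in Icc e f', ∫ s in Icc t₀ t₁, f s x y := by
    refine (aux_iterprod (fun x y => ∫ s in Icc t₀ t₁, f s x y) ?_ c d e f').symm
    apply continuous_parametric_integral_of_continuous
      (f := fun (p : ℝ × ℝ) (s : ℝ) => f s p.1 p.2) ?_ isCompact_Icc
    exact hf.comp (continuous_snd.prodMk
      ((continuous_fst.comp continuous_fst).prodMk (continuous_snd.comp continuous_fst)))
  calc ∫ s in Icc t₀ t₁, ∫ x in Icc c d, ∫ y in Icc e f', f s x y
      = ∫ s in Icc t₀ t₁, ∫ p in Icc c d ×ˢ Icc e f', f s p.1 p.2 ∂(volume.prod volume) := by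
        exact setIntegral_congr_fun measurableSet_Icc (fun s _ => step1 s)
    _ = ∫ p in Icc c d ×ˢ Icc e f', (∫ s in Icc t₀ t₁, f s p.1 p.2) ∂(volume.prod volume) := hswap
    _ = _ := step3

/-- FTC for `g * g'` on an interval. -/
lemma aux_ftc (g : ℝ → ℝ) (hg : ∀ u, DifferentiableAt ℝ g u) (hg' : Continuous (deriv g))
    (c d : ℝ) (hcd : c ≤ d) :
    ∫ u in Icc c d, g u * deriv g u = g d ^ 2 / 2 - g c ^ 2 / 2 := by
  have hgc : Continuous g := by
    rw [continuous_iff_continuousAt]; exact fun u => (hg u).continuousAt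
  rw [integral_Icc_eq_integral_Ioc, ← intervalIntegral.integral_of_le hcd]
  have key : ∀ u ∈ uIcc c d, HasDerivAt (fun u => g u ^ 2 / 2) (g u * deriv g u) u := by
    intro u _
    have h := ((hg u).hasDerivAt.mul (hg u).hasDerivAt).div_const 2
    have : (deriv g u * g u + g u * deriv g u) / 2 = g u * deriv g u := by ring
    rw [this] at h
    refine h.congr_of_eventuallyEq (Filter.Eventually.of_forall fun v => ?_)
    simp only [Pi.mul_apply]
    ring
  have hint : IntervalIntegrable (fun u => g u * deriv g u) volume c d :=
    (hgc.mul hg').intervalIntegrable c d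
  exact intervalIntegral.integral_eq_sub_of_hasDerivAt key hint

/-- split `Icc (-1) 1` at `0`. -/
lemma aux_split (h : ℝ → ℝ) (hh : Continuous h) :
    ∫ μ in Icc (-1:ℝ) 1, h μ = (∫ μ in Icc (-1:ℝ) 0, h μ) + ∫ μ in Icc (0:ℝ) 1, h μ := by
  rw [integral_Icc_eq_integral_Ioc, integral_Icc_eq_integral_Ioc, integral_Icc_eq_integral_Ioc,
    ← intervalIntegral.integral_of_le (by norm_num : (-1:ℝ) ≤ 1),
    ← intervalIntegral.integral_of_le (by norm_num : (-1:ℝ) ≤ 0),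
    ← intervalIntegral.integral_of_le (by norm_num : (0:ℝ) ≤ 1)]
  exact (intervalIntegral.integral_add_adjacent_intervals (hh.intervalIntegrable _ _)
    (hh.intervalIntegrable _ _)).symm

/-- Young's inequality. -/
lemma aux_young (ε σ u v : ℝ) (hε : 0 < ε) (hσ : 0 < σ) :
    u * v ≤ ε / (2 * σ) * u ^ 2 + σ / (2 * ε) * v ^ 2 := by
  rw [div_mul_eq_mul_div, div_mul_eq_mul_div, div_add_div _ _ (by positivity) (by positivity),
    le_div_iff₀ (by positivity)]
  nlinarith [sq_nonneg (ε * u - σ * v), mul_pos hε hσ]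

lemma aux_memLp2' (f : ℝ × ℝ → ℝ) (hf : Continuous f) (K : Set (ℝ × ℝ)) (hK : IsCompact K) :
    MemLp f 2 ((volume.prod volume).restrict K) := by
  have h : IsFiniteMeasure ((volume.prod volume).restrict K) := by
    constructor
    rw [Measure.restrict_apply_univ]
    exact hK.measure_lt_top
  obtain ⟨C, hC⟩ := hK.exists_bound_of_continuousOn hf.continuousOn
  have hKm : MeasurableSet K := hK.measurableSet
  have h2 : MemLp f ⊤ ((volume.prod volume).restrict K) :=
    memLp_top_of_bound (hf.aestronglyMeasurable.restrict) C
      ((ae_restrict_iff' hKm).2 (Filter.Eventually.of_forall hC))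
  exact h2.mono_exponent le_top

/-- Cauchy–Schwarz for iterated integrals over a box. -/
lemma aux_CS (F H : ℝ → ℝ → ℝ) (hF : Continuous fun p : ℝ × ℝ => F p.1 p.2)
    (hH : Continuous fun p : ℝ × ℝ => H p.1 p.2) (a b c d : ℝ) :
    ∫ x in Icc a b, ∫ μ in Icc c d, F x μ * H x μ
      ≤ Real.sqrt (∫ x in Icc a b, ∫ μ in Icc c d, F x μ ^ 2) *
        Real.sqrt (∫ x in Icc a b, ∫ μ in Icc c d, H x μ ^ 2) := by
  rw [aux_iterprod _ (hF.mul hH) a b c d, aux_iterprod _ (by fun_prop : Continuous fun p : ℝ × ℝ => F p.1 p.2 ^ 2) a b c d,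
    aux_iterprod _ (by fun_prop : Continuous fun p : ℝ × ℝ => H p.1 p.2 ^ 2) a b c d]
  set ρ := (volume.prod volume).restrict (Icc a b ×ˢ Icc c d) with hρ
  have hKc : IsCompact (Icc a b ×ˢ Icc c d) := isCompact_Icc.prod isCompact_Icc
  have h1 : (∫ p : ℝ × ℝ, F p.1 p.2 * H p.1 p.2 ∂ρ) ≤ ∫ p : ℝ × ℝ, |F p.1 p.2| * |H p.1 p.2| ∂ρ := by
    apply integral_mono
    · exact ContinuousOn.integrableOn_compact hKc (hF.mul hH).continuousOn
    · exact ContinuousOn.integrableOn_compact hKc (hF.abs.mul hH.abs).continuousOn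
    · intro p; exact (le_abs_self _).trans (le_of_eq (abs_mul _ _))
  have h2 := integral_mul_le_Lp_mul_Lq_of_nonneg (μ := ρ)
    (Real.holderConjugate_iff_eq_conjExponent (by norm_num) |>.2 (by norm_num) :
      Real.HolderConjugate 2 2)
    (Filter.Eventually.of_forall fun p => abs_nonneg (F p.1 p.2))
    (Filter.Eventually.of_forall fun p => abs_nonneg (H p.1 p.2))
    (by rw [show ENNReal.ofReal 2 = 2 by norm_num]
        exact aux_memLp2' (fun p => |F p.1 p.2|) hF.abs _ hKc)
    (by rw [show ENNReal.ofReal 2 = 2 by norm_num]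
        exact aux_memLp2' (fun p => |H p.1 p.2|) hH.abs _ hKc)
  have e1 : (∫ p : ℝ × ℝ, |F p.1 p.2| ^ (2:ℝ) ∂ρ) = ∫ p : ℝ × ℝ, F p.1 p.2 ^ 2 ∂ρ := by
    apply integral_congr_ae; filter_upwards with p
    rw [show ((2:ℝ)) = ((2:ℕ):ℝ) by norm_num, Real.rpow_natCast, sq_abs]
  have e2 : (∫ p : ℝ × ℝ, |H p.1 p.2| ^ (2:ℝ) ∂ρ) = ∫ p : ℝ × ℝ, H p.1 p.2 ^ 2 ∂ρ := by
    apply integral_congr_ae; filter_upwards with p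
    rw [show ((2:ℝ)) = ((2:ℕ):ℝ) by norm_num, Real.rpow_natCast, sq_abs]
  rw [e1, e2] at h2
  refine h1.trans (h2.trans_eq ?_)
  rw [Real.sqrt_eq_rpow, Real.sqrt_eq_rpow]

lemma Continuous.const_mulX {f : ℝ → ℝ} (h : Continuous f) (k : ℝ) :
    Continuous fun x => k * f x := continuous_const.mul h

lemma aux_mono (f g : ℝ → ℝ) (c d : ℝ) (hf : Continuous f) (hg : Continuous g)
    (h : ∀ x ∈ Icc c d, f x ≤ g x) : ∫ x in Icc c d, f x ≤ ∫ x in Icc c d, g x :=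
  setIntegral_mono_on hf.integrableOn_Icc hg.integrableOn_Icc measurableSet_Icc h

lemma aux_comb2 (f₁ f₂ : ℝ → ℝ) (h₁ : Continuous f₁) (h₂ : Continuous f₂) (c d k₁ k₂ : ℝ) :
    ∫ x in Icc c d, (k₁ * f₁ x + k₂ * f₂ x)
      = k₁ * (∫ x in Icc c d, f₁ x) + k₂ * (∫ x in Icc c d, f₂ x) := by
  rw [integral_add ((h₁.const_mulX k₁).integrableOn_Icc) ((h₂.const_mulX k₂).integrableOn_Icc),
    integral_const_mul, integral_const_mul]

lemma aux_comb5 (f₁ f₂ f₃ f₄ f₅ : ℝ → ℝ) (h₁ : Continuous f₁) (h₂ : Continuous f₂)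
    (h₃ : Continuous f₃) (h₄ : Continuous f₄) (h₅ : Continuous f₅) (c d k₁ k₂ k₃ k₄ k₅ : ℝ) :
    ∫ x in Icc c d, (k₁ * f₁ x + k₂ * f₂ x + k₃ * f₃ x + k₄ * f₄ x + k₅ * f₅ x)
      = k₁ * (∫ x in Icc c d, f₁ x) + k₂ * (∫ x in Icc c d, f₂ x) + k₃ * (∫ x in Icc c d, f₃ x)
        + k₄ * (∫ x in Icc c d, f₄ x) + k₅ * (∫ x in Icc c d, f₅ x) := by
  have i₁ := (h₁.const_mulX k₁).integrableOn_Icc (a := c) (b := d) (μ := volume)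
  have i₂ := (h₂.const_mulX k₂).integrableOn_Icc (a := c) (b := d) (μ := volume)
  have i₃ := (h₃.const_mulX k₃).integrableOn_Icc (a := c) (b := d) (μ := volume)
  have i₄ := (h₄.const_mulX k₄).integrableOn_Icc (a := c) (b := d) (μ := volume)
  have i₅ := (h₅.const_mulX k₅).integrableOn_Icc (a := c) (b := d) (μ := volume)
  have i₁₂ : IntegrableOn (fun x => k₁ * f₁ x + k₂ * f₂ x) (Icc c d) volume := i₁.add i₂
  have i₁₃ : IntegrableOn (fun x => k₁ * f₁ x + k₂ * f₂ x + k₃ * f₃ x) (Icc c d) volume :=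
    i₁₂.add i₃
  have i₁₄ : IntegrableOn (fun x => k₁ * f₁ x + k₂ * f₂ x + k₃ * f₃ x + k₄ * f₄ x)
    (Icc c d) volume := i₁₃.add i₄
  rw [integral_add i₁₄ i₅, integral_add i₁₃ i₄, integral_add i₁₂ i₃, integral_add i₁ i₂,
    integral_const_mul, integral_const_mul, integral_const_mul, integral_const_mul, integral_const_mul]

lemma aux_comb4 (f₁ f₂ f₃ f₄ : ℝ → ℝ) (h₁ : Continuous f₁) (h₂ : Continuous f₂)
    (h₃ : Continuous f₃) (h₄ : Continuous f₄) (c d k₁ k₂ k₃ k₄ : ℝ) :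
    ∫ x in Icc c d, (k₁ * f₁ x + k₂ * f₂ x + k₃ * f₃ x + k₄ * f₄ x)
      = k₁ * (∫ x in Icc c d, f₁ x) + k₂ * (∫ x in Icc c d, f₂ x) + k₃ * (∫ x in Icc c d, f₃ x)
        + k₄ * (∫ x in Icc c d, f₄ x) := by
  have i₁ := (h₁.const_mulX k₁).integrableOn_Icc (a := c) (b := d) (μ := volume)
  have i₂ := (h₂.const_mulX k₂).integrableOn_Icc (a := c) (b := d) (μ := volume)
  have i₃ := (h₃.const_mulX k₃).integrableOn_Icc (a := c) (b := d) (μ := volume)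
  have i₄ := (h₄.const_mulX k₄).integrableOn_Icc (a := c) (b := d) (μ := volume)
  have i₁₂ : IntegrableOn (fun x => k₁ * f₁ x + k₂ * f₂ x) (Icc c d) volume := i₁.add i₂
  have i₁₃ : IntegrableOn (fun x => k₁ * f₁ x + k₂ * f₂ x + k₃ * f₃ x) (Icc c d) volume :=
    i₁₂.add i₃
  rw [integral_add i₁₃ i₄, integral_add i₁₂ i₃, integral_add i₁ i₂,
    integral_const_mul, integral_const_mul, integral_const_mul, integral_const_mul]




open MeasureTheory Set

set_option maxHeartbeats 1000000 in
/-- A priori energy inequality for the error equation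
`ε ∂_t E + μ ∂_x E + (1/ε) 𝓛 E = R + G`, where `R ⟂ 1` in `μ`, using the spectral gap of the
collision operator `𝓛`. -/
theorem stmt7
    (κ : ℝ → ℝ → ℝ)
    (hκmeas : Measurable (Function.uncurry κ))
    (hκnonneg : ∀ μ ∈ Icc (-1:ℝ) 1, ∀ μ' ∈ Icc (-1:ℝ) 1, 0 ≤ κ μ μ')
    (hκsymm : ∀ μ ∈ Icc (-1:ℝ) 1, ∀ μ' ∈ Icc (-1:ℝ) 1, κ μ μ' = κ μ' μ)
    (hκnorm : ∀ μ ∈ Icc (-1:ℝ) 1, (∫ μ' in Icc (-1:ℝ) 1, κ μ μ') = 1)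
    -- `ker 𝓛 = span {1}`:
    (hker : ∀ g : ℝ → ℝ, MemLp g 2 (volume.restrict (Icc (-1:ℝ) 1)) →
      (∀ᵐ μ ∂(volume.restrict (Icc (-1:ℝ) 1)),
        g μ - (∫ μ' in Icc (-1:ℝ) 1, κ μ μ' * g μ') = 0) →
      ∃ c : ℝ, ∀ᵐ μ ∂(volume.restrict (Icc (-1:ℝ) 1)), g μ = c)
    -- spectral gap:
    (σ₀ : ℝ) (hσ₀ : 0 < σ₀)
    (hgap : ∀ g : ℝ → ℝ, MemLp g 2 (volume.restrict (Icc (-1:ℝ) 1)) →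
      σ₀ * (∫ μ in Icc (-1:ℝ) 1, (g μ - (1/2) * ∫ μ' in Icc (-1:ℝ) 1, g μ') ^ 2) ≤
        ∫ μ in Icc (-1:ℝ) 1, g μ * (g μ - ∫ μ' in Icc (-1:ℝ) 1, κ μ μ' * g μ'))
    (ε T a b : ℝ) (hε : 0 < ε) (hT : 0 < T) (hab : a < b)
    (E R G : ℝ → ℝ → ℝ → ℝ)
    (hEcont : Continuous fun p : ℝ × ℝ × ℝ => E p.1 p.2.1 p.2.2)
    (hRcont : Continuous fun p : ℝ × ℝ × ℝ => R p.1 p.2.1 p.2.2)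
    (hGcont : Continuous fun p : ℝ × ℝ × ℝ => G p.1 p.2.1 p.2.2)
    (hdt : ∀ t x μ : ℝ, DifferentiableAt ℝ (fun s => E s x μ) t)
    (hdx : ∀ t x μ : ℝ, DifferentiableAt ℝ (fun y => E t y μ) x)
    (hdtcont : Continuous fun p : ℝ × ℝ × ℝ => deriv (fun s => E s p.2.1 p.2.2) p.1)
    (hdxcont : Continuous fun p : ℝ × ℝ × ℝ => deriv (fun y => E p.1 y p.2.2) p.2.1)
    (hpde : ∀ t ∈ Icc 0 T, ∀ x ∈ Icc a b, ∀ μ ∈ Icc (-1:ℝ) 1,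
      ε * deriv (fun s => E s x μ) t + μ * deriv (fun y => E t y μ) x +
        (1 / ε) * (E t x μ - ∫ μ' in Icc (-1:ℝ) 1, κ μ μ' * E t x μ') =
          R t x μ + G t x μ)
    -- `R` has zero angular average:
    (hRavg : ∀ t ∈ Icc 0 T, ∀ x ∈ Icc a b, (∫ μ in Icc (-1:ℝ) 1, R t x μ) = 0) :
    ∀ t ∈ Icc 0 T,
      (ε / 2) * (∫ x in Icc a b, ∫ μ in Icc (-1:ℝ) 1, (E t x μ) ^ 2) +
        (σ₀ / (2 * ε)) * (∫ s in Icc 0 t, ∫ x in Icc a b, ∫ μ in Icc (-1:ℝ) 1,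
          (E s x μ - (1/2) * ∫ μ' in Icc (-1:ℝ) 1, E s x μ') ^ 2) ≤
      (ε / 2) * (∫ x in Icc a b, ∫ μ in Icc (-1:ℝ) 1, (E 0 x μ) ^ 2) +
        (ε / (2 * σ₀)) * (∫ s in Icc 0 t, ∫ x in Icc a b, ∫ μ in Icc (-1:ℝ) 1,
          (R s x μ) ^ 2) +
        (∫ s in Icc 0 t,
          Real.sqrt (∫ x in Icc a b, ∫ μ in Icc (-1:ℝ) 1, (G s x μ) ^ 2) *
            Real.sqrt (∫ x in Icc a b, ∫ μ in Icc (-1:ℝ) 1, (E s x μ) ^ 2)) +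
        (1 / 2) * (∫ s in Icc 0 t, ∫ μ in Icc (0:ℝ) 1, μ * (E s a μ) ^ 2) +
        (1 / 2) * (∫ s in Icc 0 t, ∫ μ in Icc (-1:ℝ) 0, |μ| * (E s b μ) ^ 2) := by
  intro t ht
  obtain ⟨ht0, htT⟩ := ht
  have hIs : ∀ s ∈ Icc (0:ℝ) t, s ∈ Icc (0:ℝ) T := fun s hs => ⟨hs.1, hs.2.trans htT⟩
  have hεne : (ε:ℝ) ≠ 0 := ne_of_gt hε
  -- elementary continuity compositions
  have c3 : ∀ s x : ℝ, Continuous fun m : ℝ => ((s, x, m) : ℝ × ℝ × ℝ) := fun s x =>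
    continuous_const.prodMk (continuous_const.prodMk continuous_id)
  have c3' : ∀ s : ℝ, Continuous fun p : ℝ × ℝ => ((s, p.1, p.2) : ℝ × ℝ × ℝ) := fun s =>
    continuous_const.prodMk (continuous_fst.prodMk continuous_snd)
  have c3u : ∀ x m : ℝ, Continuous fun u : ℝ => ((u, x, m) : ℝ × ℝ × ℝ) := fun x m =>
    continuous_id.prodMk (continuous_const.prodMk continuous_const)
  have c3y : ∀ s m : ℝ, Continuous fun y : ℝ => ((s, y, m) : ℝ × ℝ × ℝ) := fun s m =>
    continuous_const.prodMk (continuous_id.prodMk continuous_const)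
  have c3sm : ∀ x : ℝ, Continuous fun p : ℝ × ℝ => ((p.1, x, p.2) : ℝ × ℝ × ℝ) := fun x =>
    continuous_fst.prodMk (continuous_const.prodMk continuous_snd)
  have cE3 : ∀ s x : ℝ, Continuous fun m => E s x m := fun s x => hEcont.comp (c3 s x)
  have cR3 : ∀ s x : ℝ, Continuous fun m => R s x m := fun s x => hRcont.comp (c3 s x)
  have cG3 : ∀ s x : ℝ, Continuous fun m => G s x m := fun s x => hGcont.comp (c3 s x)
  have cdt3 : ∀ s x : ℝ, Continuous fun m => deriv (fun u => E u x m) s := fun s x =>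
    hdtcont.comp (c3 s x)
  have cdx3 : ∀ s x : ℝ, Continuous fun m => deriv (fun y => E s y m) x := fun s x =>
    hdxcont.comp (c3 s x)
  -- continuity of the average
  have cAvg3 : Continuous fun p : ℝ × ℝ × ℝ => (1/2) * ∫ μ' in Icc (-1:ℝ) 1, E p.1 p.2.1 μ' := by
    have h0 := aux_cont2 E hEcont (-1) 1
    exact (continuous_const.mul (h0.comp (continuous_fst.prodMk (continuous_fst.comp continuous_snd))))
  -- triple continuity of the five integrands
  have cQi : Continuous fun p : ℝ × ℝ × ℝ => (E p.1 p.2.1 p.2.2 - (1/2) * ∫ μ' in Icc (-1:ℝ) 1, E p.1 p.2.1 μ') ^ 2 :=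
    (hEcont.sub cAvg3).pow 2
  have cAi : Continuous fun p : ℝ × ℝ × ℝ => E p.1 p.2.1 p.2.2 * deriv (fun u => E u p.2.1 p.2.2) p.1 := hEcont.mul hdtcont
  have cBi : Continuous fun p : ℝ × ℝ × ℝ => p.2.2 * (E p.1 p.2.1 p.2.2 * deriv (fun y => E p.1 y p.2.2) p.2.1) :=
    (continuous_snd.comp continuous_snd).mul (hEcont.mul hdxcont)
  have cRi : Continuous fun p : ℝ × ℝ × ℝ => R p.1 p.2.1 p.2.2 ^ 2 := hRcont.pow 2
  have cGi : Continuous fun p : ℝ × ℝ × ℝ => G p.1 p.2.1 p.2.2 * E p.1 p.2.1 p.2.2 := hGcont.mul hEcont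
  -- pair continuity of the μ-integrals
  have cQ2 : Continuous fun p : ℝ × ℝ => ∫ m in Icc (-1:ℝ) 1, (E p.1 p.2 m - (1/2) * ∫ μ' in Icc (-1:ℝ) 1, E p.1 p.2 μ') ^ 2 :=
    aux_cont2 (fun s x m => (E s x m - (1/2) * ∫ μ' in Icc (-1:ℝ) 1, E s x μ') ^ 2) cQi (-1) 1
  have cA2 : Continuous fun p : ℝ × ℝ => ∫ m in Icc (-1:ℝ) 1, E p.1 p.2 m * deriv (fun u => E u p.2 m) p.1 :=
    aux_cont2 (fun s x m => E s x m * deriv (fun u => E u x m) s) cAi (-1) 1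
  have cB2 : Continuous fun p : ℝ × ℝ => ∫ m in Icc (-1:ℝ) 1, m * (E p.1 p.2 m * deriv (fun y => E p.1 y m) p.2) :=
    aux_cont2 (fun s x m => m * (E s x m * deriv (fun y => E s y m) x)) cBi (-1) 1
  have cR2 : Continuous fun p : ℝ × ℝ => ∫ m in Icc (-1:ℝ) 1, R p.1 p.2 m ^ 2 :=
    aux_cont2 (fun s x m => R s x m ^ 2) cRi (-1) 1
  have cG2 : Continuous fun p : ℝ × ℝ => ∫ m in Icc (-1:ℝ) 1, G p.1 p.2 m * E p.1 p.2 m :=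
    aux_cont2 (fun s x m => G s x m * E s x m) cGi (-1) 1
  -- pointwise multiplied PDE
  have key : ∀ s ∈ Icc (0:ℝ) t, ∀ x ∈ Icc a b, ∀ m ∈ Icc (-1:ℝ) 1,
      E s x m * (E s x m - ∫ μ' in Icc (-1:ℝ) 1, κ m μ' * E s x μ')
        = ε * (R s x m * E s x m)
          + ε * (G s x m * E s x m) + (-(ε^2)) * (E s x m * deriv (fun u => E u x m) s) + (-ε) * (m * (E s x m * deriv (fun y => E s y m) x)) := by
    intro s hs x hx m hm
    have h := hpde s (hIs s hs) x hx m hm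
    field_simp at h
    linear_combination (E s x m) * h
  -- spectral gap applied in μ, combined with the pointwise identity
  have gap : ∀ s ∈ Icc (0:ℝ) t, ∀ x ∈ Icc a b,
      σ₀ * (∫ m in Icc (-1:ℝ) 1, (E s x m - (1/2) * ∫ μ' in Icc (-1:ℝ) 1, E s x μ') ^ 2)
        ≤ ε * (∫ m in Icc (-1:ℝ) 1, R s x m * E s x m) + ε * (∫ m in Icc (-1:ℝ) 1, G s x m * E s x m)
          + (-(ε^2)) * (∫ m in Icc (-1:ℝ) 1, E s x m * deriv (fun u => E u x m) s) + (-ε) * (∫ m in Icc (-1:ℝ) 1, m * (E s x m * deriv (fun y => E s y m) x)) := by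
    intro s hs x hx
    have hm := aux_memLp2 (fun m => E s x m) (cE3 s x) (-1) 1
    have h1 : σ₀ * (∫ m in Icc (-1:ℝ) 1, (E s x m - (1/2) * ∫ μ' in Icc (-1:ℝ) 1, E s x μ') ^ 2)
        ≤ ∫ m in Icc (-1:ℝ) 1, E s x m * (E s x m - ∫ μ' in Icc (-1:ℝ) 1, κ m μ' * E s x μ') :=
      hgap (fun m => E s x m) hm
    have h2 : (∫ m in Icc (-1:ℝ) 1, E s x m * (E s x m - ∫ μ' in Icc (-1:ℝ) 1, κ m μ' * E s x μ'))
        = ∫ m in Icc (-1:ℝ) 1, (ε * (R s x m * E s x m) + ε * (G s x m * E s x m)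
            + (-(ε^2)) * (E s x m * deriv (fun u => E u x m) s) + (-ε) * (m * (E s x m * deriv (fun y => E s y m) x))) :=
      setIntegral_congr_fun measurableSet_Icc (fun m hm' => key s hs x hx m hm')
    have h3 := aux_comb4 (fun m => R s x m * E s x m) (fun m => G s x m * E s x m)
      (fun m => E s x m * deriv (fun u => E u x m) s) (fun m => m * (E s x m * deriv (fun y => E s y m) x))
      ((cR3 s x).mul (cE3 s x)) ((cG3 s x).mul (cE3 s x))
      ((cE3 s x).mul (cdt3 s x))
      (continuous_id.mul ((cE3 s x).mul (cdx3 s x)))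
      (-1) 1 ε ε (-(ε^2)) (-ε)
    calc σ₀ * (∫ m in Icc (-1:ℝ) 1, (E s x m - (1/2) * ∫ μ' in Icc (-1:ℝ) 1, E s x μ') ^ 2) ≤ _ := h1
      _ = _ := h2
      _ = _ := h3
  -- bound for the R-term
  have hRE : ∀ s ∈ Icc (0:ℝ) t, ∀ x ∈ Icc a b,
      (∫ m in Icc (-1:ℝ) 1, R s x m * E s x m)
        ≤ ε/(2*σ₀) * (∫ m in Icc (-1:ℝ) 1, R s x m ^ 2) + σ₀/(2*ε) * (∫ m in Icc (-1:ℝ) 1, (E s x m - (1/2) * ∫ μ' in Icc (-1:ℝ) 1, E s x μ') ^ 2) := by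
    intro s hs x hx
    have hz : (∫ m in Icc (-1:ℝ) 1, R s x m) = 0 := hRavg s (hIs s hs) x hx
    have e0 : (∫ m in Icc (-1:ℝ) 1, R s x m * E s x m)
        = ∫ m in Icc (-1:ℝ) 1, R s x m * (E s x m - (1/2) * ∫ μ' in Icc (-1:ℝ) 1, E s x μ') := by
      have hfe : (fun m => R s x m * (E s x m - (1/2) * ∫ μ' in Icc (-1:ℝ) 1, E s x μ'))
          = fun m => R s x m * E s x m
            + (-((1/2) * ∫ μ' in Icc (-1:ℝ) 1, E s x μ')) * R s x m := by
        funext m; ring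
      rw [hfe, integral_add (f := fun m => R s x m * E s x m) (((cR3 s x).mul (cE3 s x)).integrableOn_Icc)
        (((cR3 s x).const_mulX _).integrableOn_Icc), integral_const_mul, hz,
        mul_zero, add_zero]
    rw [e0]
    have hmono := aux_mono (fun m => R s x m * (E s x m - (1/2) * ∫ μ' in Icc (-1:ℝ) 1, E s x μ'))
      (fun m => ε/(2*σ₀) * (R s x m ^ 2) + σ₀/(2*ε) * ((E s x m - (1/2) * ∫ μ' in Icc (-1:ℝ) 1, E s x μ') ^ 2)) (-1) 1
      ((cR3 s x).mul ((cE3 s x).sub continuous_const))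
      (((cR3 s x).pow 2).const_mulX _ |>.add
        (((cE3 s x).sub continuous_const |>.pow 2).const_mulX _))
      (fun m _ => aux_young ε σ₀ _ _ hε hσ₀)
    calc (∫ m in Icc (-1:ℝ) 1, R s x m * (E s x m - (1/2) * ∫ μ' in Icc (-1:ℝ) 1, E s x μ')) ≤ _ := hmono
      _ = _ := aux_comb2 (fun m => R s x m ^ 2) (fun m => (E s x m - (1/2) * ∫ μ' in Icc (-1:ℝ) 1, E s x μ') ^ 2)
          ((cR3 s x).pow 2) ((cE3 s x).sub continuous_const |>.pow 2)
          (-1) 1 (ε/(2*σ₀)) (σ₀/(2*ε))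
  -- pointwise (in (s,x)) combined inequality
  have combo_nonpos : ∀ s ∈ Icc (0:ℝ) t, ∀ x ∈ Icc a b,
      (σ₀/2) * (∫ m in Icc (-1:ℝ) 1, (E s x m - (1/2) * ∫ μ' in Icc (-1:ℝ) 1, E s x μ') ^ 2) + (ε^2) * (∫ m in Icc (-1:ℝ) 1, E s x m * deriv (fun u => E u x m) s) + ε * (∫ m in Icc (-1:ℝ) 1, m * (E s x m * deriv (fun y => E s y m) x)) + (-(ε^2/(2*σ₀))) * (∫ m in Icc (-1:ℝ) 1, R s x m ^ 2) + (-ε) * (∫ m in Icc (-1:ℝ) 1, G s x m * E s x m) ≤ 0 := by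
    intro s hs x hx
    have h1 := gap s hs x hx
    have h2 := mul_le_mul_of_nonneg_left (hRE s hs x hx) hε.le
    have e2 : ε * (ε/(2*σ₀) * (∫ m in Icc (-1:ℝ) 1, R s x m ^ 2) + σ₀/(2*ε) * (∫ m in Icc (-1:ℝ) 1, (E s x m - (1/2) * ∫ μ' in Icc (-1:ℝ) 1, E s x μ') ^ 2))
        = ε^2/(2*σ₀) * (∫ m in Icc (-1:ℝ) 1, R s x m ^ 2) + σ₀/2 * (∫ m in Icc (-1:ℝ) 1, (E s x m - (1/2) * ∫ μ' in Icc (-1:ℝ) 1, E s x μ') ^ 2) := by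
      field_simp
    rw [e2] at h2
    nlinarith [h1, h2]
  -- integrate in x
  have step_x : ∀ s ∈ Icc (0:ℝ) t,
      (σ₀/2) * (∫ x in Icc a b, ∫ m in Icc (-1:ℝ) 1, (E s x m - (1/2) * ∫ μ' in Icc (-1:ℝ) 1, E s x μ') ^ 2) + (ε^2) * (∫ x in Icc a b, ∫ m in Icc (-1:ℝ) 1, E s x m * deriv (fun u => E u x m) s) + ε * (∫ x in Icc a b, ∫ m in Icc (-1:ℝ) 1, m * (E s x m * deriv (fun y => E s y m) x)) + (-(ε^2/(2*σ₀))) * (∫ x in Icc a b, ∫ m in Icc (-1:ℝ) 1, R s x m ^ 2) + (-ε) * (∫ x in Icc a b, ∫ m in Icc (-1:ℝ) 1, G s x m * E s x m) ≤ 0 := by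
    intro s hs
    have cQx : Continuous fun x => ∫ m in Icc (-1:ℝ) 1, (E s x m - (1/2) * ∫ μ' in Icc (-1:ℝ) 1, E s x μ') ^ 2 :=
      cQ2.comp (continuous_const.prodMk continuous_id)
    have cAx : Continuous fun x => ∫ m in Icc (-1:ℝ) 1, E s x m * deriv (fun u => E u x m) s :=
      cA2.comp (continuous_const.prodMk continuous_id)
    have cBx : Continuous fun x => ∫ m in Icc (-1:ℝ) 1, m * (E s x m * deriv (fun y => E s y m) x) :=
      cB2.comp (continuous_const.prodMk continuous_id)
    have cRx : Continuous fun x => ∫ m in Icc (-1:ℝ) 1, R s x m ^ 2 :=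
      cR2.comp (continuous_const.prodMk continuous_id)
    have cGx : Continuous fun x => ∫ m in Icc (-1:ℝ) 1, G s x m * E s x m :=
      cG2.comp (continuous_const.prodMk continuous_id)
    have hmono := aux_mono
      (fun x => (σ₀/2) * (∫ m in Icc (-1:ℝ) 1, (E s x m - (1/2) * ∫ μ' in Icc (-1:ℝ) 1, E s x μ') ^ 2) + (ε^2) * (∫ m in Icc (-1:ℝ) 1, E s x m * deriv (fun u => E u x m) s) + ε * (∫ m in Icc (-1:ℝ) 1, m * (E s x m * deriv (fun y => E s y m) x)) + (-(ε^2/(2*σ₀))) * (∫ m in Icc (-1:ℝ) 1, R s x m ^ 2) + (-ε) * (∫ m in Icc (-1:ℝ) 1, G s x m * E s x m))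
      (fun _ => (0:ℝ)) a b
      (((((cQx.const_mulX _).add (cAx.const_mulX _)).add (cBx.const_mulX _)).add
        (cRx.const_mulX _)).add (cGx.const_mulX _)) continuous_const
      (fun x hx => combo_nonpos s hs x hx)
    rw [aux_comb5 _ _ _ _ _ cQx cAx cBx cRx cGx a b (σ₀/2) (ε^2) ε (-(ε^2/(2*σ₀))) (-ε),
      integral_zero] at hmono
    exact hmono
  -- integrate in s
  have cQs : Continuous fun s => ∫ x in Icc a b, ∫ m in Icc (-1:ℝ) 1, (E s x m - (1/2) * ∫ μ' in Icc (-1:ℝ) 1, E s x μ') ^ 2 :=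
    aux_cont1 _ cQ2 a b
  have cAs : Continuous fun s => ∫ x in Icc a b, ∫ m in Icc (-1:ℝ) 1, E s x m * deriv (fun u => E u x m) s :=
    aux_cont1 _ cA2 a b
  have cBs : Continuous fun s => ∫ x in Icc a b, ∫ m in Icc (-1:ℝ) 1, m * (E s x m * deriv (fun y => E s y m) x) :=
    aux_cont1 _ cB2 a b
  have cRs : Continuous fun s => ∫ x in Icc a b, ∫ m in Icc (-1:ℝ) 1, R s x m ^ 2 :=
    aux_cont1 _ cR2 a b
  have cGs : Continuous fun s => ∫ x in Icc a b, ∫ m in Icc (-1:ℝ) 1, G s x m * E s x m :=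
    aux_cont1 _ cG2 a b
  have MAIN : (σ₀/2) * (∫ s in Icc 0 t, ∫ x in Icc a b, ∫ m in Icc (-1:ℝ) 1, (E s x m - (1/2) * ∫ μ' in Icc (-1:ℝ) 1, E s x μ') ^ 2) + (ε^2) * (∫ s in Icc 0 t, ∫ x in Icc a b, ∫ m in Icc (-1:ℝ) 1, E s x m * deriv (fun u => E u x m) s) + ε * (∫ s in Icc 0 t, ∫ x in Icc a b, ∫ m in Icc (-1:ℝ) 1, m * (E s x m * deriv (fun y => E s y m) x)) + (-(ε^2/(2*σ₀))) * (∫ s in Icc 0 t, ∫ x in Icc a b, ∫ m in Icc (-1:ℝ) 1, R s x m ^ 2) + (-ε) * (∫ s in Icc 0 t, ∫ x in Icc a b, ∫ m in Icc (-1:ℝ) 1, G s x m * E s x m) ≤ 0 := by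
    have hmono := aux_mono
      (fun s => (σ₀/2) * (∫ x in Icc a b, ∫ m in Icc (-1:ℝ) 1, (E s x m - (1/2) * ∫ μ' in Icc (-1:ℝ) 1, E s x μ') ^ 2) + (ε^2) * (∫ x in Icc a b, ∫ m in Icc (-1:ℝ) 1, E s x m * deriv (fun u => E u x m) s) + ε * (∫ x in Icc a b, ∫ m in Icc (-1:ℝ) 1, m * (E s x m * deriv (fun y => E s y m) x)) + (-(ε^2/(2*σ₀))) * (∫ x in Icc a b, ∫ m in Icc (-1:ℝ) 1, R s x m ^ 2) + (-ε) * (∫ x in Icc a b, ∫ m in Icc (-1:ℝ) 1, G s x m * E s x m))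
      (fun _ => (0:ℝ)) 0 t
      (((((cQs.const_mulX _).add (cAs.const_mulX _)).add (cBs.const_mulX _)).add
        (cRs.const_mulX _)).add (cGs.const_mulX _)) continuous_const step_x
    rw [aux_comb5 _ _ _ _ _ cQs cAs cBs cRs cGs 0 t (σ₀/2) (ε^2) ε (-(ε^2/(2*σ₀))) (-ε),
      integral_zero] at hmono
    exact hmono
  -- the ∂ₜ term: fundamental theorem of calculus in s
  have hIA : (∫ s in Icc 0 t, ∫ x in Icc a b, ∫ m in Icc (-1:ℝ) 1, E s x m * deriv (fun u => E u x m) s)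
      = (∫ x in Icc a b, ∫ m in Icc (-1:ℝ) 1, E t x m ^ 2) / 2
        - (∫ x in Icc a b, ∫ m in Icc (-1:ℝ) 1, E 0 x m ^ 2) / 2 := by
    rw [aux_swap13 (fun s x m => E s x m * deriv (fun u => E u x m) s) cAi 0 t a b (-1) 1]
    have e1 : ∀ x m : ℝ, (∫ s in Icc 0 t, E s x m * deriv (fun u => E u x m) s)
        = E t x m ^ 2 / 2 - E 0 x m ^ 2 / 2 := by
      intro x m
      exact aux_ftc (fun u => E u x m) (fun u => hdt u x m) (hdtcont.comp (c3u x m)) 0 t ht0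
    have e2 : ∀ x : ℝ, (∫ m in Icc (-1:ℝ) 1, ∫ s in Icc 0 t, E s x m * deriv (fun u => E u x m) s)
        = (∫ m in Icc (-1:ℝ) 1, E t x m ^ 2) / 2 - (∫ m in Icc (-1:ℝ) 1, E 0 x m ^ 2) / 2 := by
      intro x
      rw [setIntegral_congr_fun measurableSet_Icc (fun m _ => e1 x m),
        integral_sub (f := fun m => E t x m ^ 2 / 2) (g := fun m => E 0 x m ^ 2 / 2) ((((show Continuous fun m => E t x m ^ 2 from (cE3 t x).pow 2)).div_const 2).integrableOn_Icc)
          ((((show Continuous fun m => E 0 x m ^ 2 from (cE3 0 x).pow 2)).div_const 2).integrableOn_Icc), integral_div, integral_div]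
    rw [setIntegral_congr_fun measurableSet_Icc (fun x _ => e2 x)]
    have cT : Continuous fun x => (∫ m in Icc (-1:ℝ) 1, E t x m ^ 2) / 2 :=
      ((aux_cont2 (fun s x m => E s x m ^ 2) (hEcont.pow 2) (-1) 1).comp
        (continuous_const.prodMk continuous_id)).div_const 2
    have c0 : Continuous fun x => (∫ m in Icc (-1:ℝ) 1, E 0 x m ^ 2) / 2 :=
      ((aux_cont2 (fun s x m => E s x m ^ 2) (hEcont.pow 2) (-1) 1).comp
        (continuous_const.prodMk continuous_id)).div_const 2
    rw [integral_sub cT.integrableOn_Icc c0.integrableOn_Icc, integral_div, integral_div]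
  -- the transport term: FTC in x and sign considerations at the boundary
  have hBpt : ∀ s ∈ Icc (0:ℝ) t,
      (-(1/2)) * (∫ m in Icc (0:ℝ) 1, m * E s a m ^ 2)
        + (-(1/2)) * (∫ m in Icc (-1:ℝ) 0, |m| * E s b m ^ 2)
      ≤ ∫ x in Icc a b, ∫ m in Icc (-1:ℝ) 1, m * (E s x m * deriv (fun y => E s y m) x) := by
    intro s hs
    have hsw : (∫ x in Icc a b, ∫ m in Icc (-1:ℝ) 1, m * (E s x m * deriv (fun y => E s y m) x))
        = ∫ m in Icc (-1:ℝ) 1, ∫ x in Icc a b, m * (E s x m * deriv (fun y => E s y m) x) :=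
      aux_swap2 (fun x m => m * (E s x m * deriv (fun y => E s y m) x))
        (cBi.comp (c3' s)) a b (-1) 1
    have hin : ∀ m : ℝ, (∫ x in Icc a b, m * (E s x m * deriv (fun y => E s y m) x))
        = m * (E s b m ^ 2 / 2 - E s a m ^ 2 / 2) := by
      intro m
      rw [integral_const_mul]
      congr 1
      exact aux_ftc (fun y => E s y m) (fun y => hdx s y m) (hdxcont.comp (c3y s m)) a b hab.le
    have ch : Continuous fun m => m * (E s b m ^ 2 / 2 - E s a m ^ 2 / 2) :=
      continuous_id.mul ((((cE3 s b).pow 2).div_const 2).sub (((cE3 s a).pow 2).div_const 2))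
    rw [hsw, setIntegral_congr_fun measurableSet_Icc (fun m _ => hin m), aux_split _ ch]
    have p1 : (-(1/2)) * (∫ m in Icc (-1:ℝ) 0, |m| * E s b m ^ 2)
        ≤ ∫ m in Icc (-1:ℝ) 0, m * (E s b m ^ 2 / 2 - E s a m ^ 2 / 2) := by
      have hm := aux_mono (fun m => (-(1/2)) * (|m| * E s b m ^ 2))
        (fun m => m * (E s b m ^ 2 / 2 - E s a m ^ 2 / 2)) (-1) 0
        (((continuous_abs.mul ((cE3 s b).pow 2))).const_mulX _) ch ?_
      · calc (-(1/2)) * (∫ m in Icc (-1:ℝ) 0, |m| * E s b m ^ 2)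
            = ∫ m in Icc (-1:ℝ) 0, (-(1/2)) * (|m| * E s b m ^ 2) := (integral_const_mul _ _).symm
          _ ≤ _ := hm
      · intro m hm'
        show (-(1/2)) * (|m| * E s b m ^ 2) ≤ m * (E s b m ^ 2 / 2 - E s a m ^ 2 / 2)
        rw [abs_of_nonpos hm'.2]
        nlinarith [sq_nonneg (E s a m), hm'.2]
    have p2 : (-(1/2)) * (∫ m in Icc (0:ℝ) 1, m * E s a m ^ 2)
        ≤ ∫ m in Icc (0:ℝ) 1, m * (E s b m ^ 2 / 2 - E s a m ^ 2 / 2) := by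
      have hm := aux_mono (fun m => (-(1/2)) * (m * E s a m ^ 2))
        (fun m => m * (E s b m ^ 2 / 2 - E s a m ^ 2 / 2)) 0 1
        ((continuous_id.mul ((cE3 s a).pow 2)).const_mulX _) ch ?_
      · calc (-(1/2)) * (∫ m in Icc (0:ℝ) 1, m * E s a m ^ 2)
            = ∫ m in Icc (0:ℝ) 1, (-(1/2)) * (m * E s a m ^ 2) := (integral_const_mul _ _).symm
          _ ≤ _ := hm
      · intro m hm'
        show (-(1/2)) * (m * E s a m ^ 2) ≤ m * (E s b m ^ 2 / 2 - E s a m ^ 2 / 2)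
        nlinarith [sq_nonneg (E s b m), hm'.1]
    linarith
  -- continuity of the boundary integrals in s
  have cBa : Continuous fun s => ∫ m in Icc (0:ℝ) 1, m * E s a m ^ 2 := by
    refine aux_cont1 (fun s m => m * E s a m ^ 2) ?_ 0 1
    exact continuous_snd.mul ((hEcont.comp
      (continuous_fst.prodMk (continuous_const.prodMk continuous_snd))).pow 2)
  have cBb : Continuous fun s => ∫ m in Icc (-1:ℝ) 0, |m| * E s b m ^ 2 := by
    refine aux_cont1 (fun s m => |m| * E s b m ^ 2) ?_ (-1) 0
    exact (continuous_abs.comp continuous_snd).mul ((hEcont.comp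
      (continuous_fst.prodMk (continuous_const.prodMk continuous_snd))).pow 2)
  have hIB : (-(1/2)) * (∫ s in Icc 0 t, ∫ m in Icc (0:ℝ) 1, m * E s a m ^ 2)
        + (-(1/2)) * (∫ s in Icc 0 t, ∫ m in Icc (-1:ℝ) 0, |m| * E s b m ^ 2)
      ≤ ∫ s in Icc 0 t, ∫ x in Icc a b, ∫ m in Icc (-1:ℝ) 1,
          m * (E s x m * deriv (fun y => E s y m) x) := by
    have hm := aux_mono
      (fun s => (-(1/2)) * (∫ m in Icc (0:ℝ) 1, m * E s a m ^ 2)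
        + (-(1/2)) * (∫ m in Icc (-1:ℝ) 0, |m| * E s b m ^ 2))
      (fun s => ∫ x in Icc a b, ∫ m in Icc (-1:ℝ) 1, m * (E s x m * deriv (fun y => E s y m) x)) 0 t
      ((cBa.const_mulX _).add (cBb.const_mulX _)) cBs hBpt
    calc _ = ∫ s in Icc 0 t, ((-(1/2)) * (∫ m in Icc (0:ℝ) 1, m * E s a m ^ 2)
          + (-(1/2)) * (∫ m in Icc (-1:ℝ) 0, |m| * E s b m ^ 2)) :=
        (aux_comb2 _ _ cBa cBb 0 t (-(1/2)) (-(1/2))).symm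
      _ ≤ _ := hm
  -- the Cauchy–Schwarz bound for the G-term
  have cGsq : Continuous fun s => ∫ x in Icc a b, ∫ m in Icc (-1:ℝ) 1, G s x m ^ 2 :=
    aux_cont1 _ (aux_cont2 (fun s x m => G s x m ^ 2) (hGcont.pow 2) (-1) 1) a b
  have cEsq : Continuous fun s => ∫ x in Icc a b, ∫ m in Icc (-1:ℝ) 1, E s x m ^ 2 :=
    aux_cont1 _ (aux_cont2 (fun s x m => E s x m ^ 2) (hEcont.pow 2) (-1) 1) a b
  have hIGE : (∫ s in Icc 0 t, ∫ x in Icc a b, ∫ m in Icc (-1:ℝ) 1, G s x m * E s x m)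
      ≤ ∫ s in Icc 0 t, Real.sqrt (∫ x in Icc a b, ∫ m in Icc (-1:ℝ) 1, G s x m ^ 2)
          * Real.sqrt (∫ x in Icc a b, ∫ m in Icc (-1:ℝ) 1, E s x m ^ 2) := by
    refine aux_mono _ _ 0 t cGs
      ((Real.continuous_sqrt.comp cGsq).mul (Real.continuous_sqrt.comp cEsq)) ?_
    intro s _
    exact aux_CS (fun x m => G s x m) (fun x m => E s x m)
      (hGcont.comp (c3' s)) (hEcont.comp (c3' s)) a b (-1) 1
  -- final arithmetic
  rw [hIA] at MAIN
  set yt := ∫ x in Icc a b, ∫ m in Icc (-1:ℝ) 1, E t x m ^ 2 with hyt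
  set y0 := ∫ x in Icc a b, ∫ m in Icc (-1:ℝ) 1, E 0 x m ^ 2 with hy0
  set W := ∫ s in Icc 0 t, ∫ x in Icc a b, ∫ m in Icc (-1:ℝ) 1,
      (E s x m - (1/2) * ∫ μ' in Icc (-1:ℝ) 1, E s x μ') ^ 2 with hW
  set IR := ∫ s in Icc 0 t, ∫ x in Icc a b, ∫ m in Icc (-1:ℝ) 1, R s x m ^ 2 with hIR
  set IB := ∫ s in Icc 0 t, ∫ x in Icc a b, ∫ m in Icc (-1:ℝ) 1,
      m * (E s x m * deriv (fun y => E s y m) x) with hIBdef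
  set IGE := ∫ s in Icc 0 t, ∫ x in Icc a b, ∫ m in Icc (-1:ℝ) 1, G s x m * E s x m with hIGEdef
  set CS := ∫ s in Icc 0 t, Real.sqrt (∫ x in Icc a b, ∫ m in Icc (-1:ℝ) 1, G s x m ^ 2)
      * Real.sqrt (∫ x in Icc a b, ∫ m in Icc (-1:ℝ) 1, E s x m ^ 2) with hCS
  set Ba := ∫ s in Icc 0 t, ∫ m in Icc (0:ℝ) 1, m * E s a m ^ 2 with hBa
  set Bb := ∫ s in Icc 0 t, ∫ m in Icc (-1:ℝ) 0, |m| * E s b m ^ 2 with hBb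
  refine le_of_mul_le_mul_left ?_ hε
  have expand : ε * (ε / 2 * yt + σ₀ / (2 * ε) * W) = ε ^ 2 / 2 * yt + σ₀ / 2 * W := by
    field_simp
  rw [expand]
  have eR : ε * (ε / 2 * y0 + ε / (2 * σ₀) * IR + CS + 1 / 2 * Ba + 1 / 2 * Bb)
      = ε ^ 2 / 2 * y0 + ε ^ 2 / (2 * σ₀) * IR + ε * CS + ε / 2 * Ba + ε / 2 * Bb := by ring
  rw [eR]
  have m2 := mul_le_mul_of_nonneg_left hIB hε.le
  have e2' : ε * ((-(1/2)) * Ba + (-(1/2)) * Bb) = -(ε / 2 * Ba) + -(ε / 2 * Bb) := by ring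
  rw [e2'] at m2
  have m3 := mul_le_mul_of_nonneg_left hIGE hε.le
  nlinarith [MAIN, m2, m3]
end
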